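/- Let n ≥ 2 be an integer, μ ∈ (0,1), and V_μ = {x ∈ ℝⁿ : (x₁, x₂) = (r cos θ, r sin θ) with r > 0, θ ∈ (0, μπ)}. Let h ∈ C²((0, μπ)) with h > 0, and define f : V_μ → ℝ by f(x) = r h(θ), where (r, θ) are the polar coordinates of (x₁, x₂). Then f satisfies Δf − (∂_i f ∂_j f ∂_{ij} f)/(1 + |∇f|²) + n/f = 0 in V_μ if and only if h(1+h²)(h''+h) + n(1 + h² + (h')²) = 0 on (0, μπ). -/

import Mathlib

open scoped BigOperators RealInnerProductSpace
open Metric Filter Topology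

noncomputable section
set_option maxHeartbeats 1000000

/-- The partial derivative `∂_i f` at `x`. -/
def pd (n : ℕ) (f : EuclideanSpace ℝ (Fin n) → ℝ) (i : Fin n)
    (x : EuclideanSpace ℝ (Fin n)) : ℝ :=
  fderiv ℝ f x (EuclideanSpace.single i 1)

/-- The second partial derivative `∂_{ij} f` at `x`. -/
def pd2 (n : ℕ) (f : EuclideanSpace ℝ (Fin n) → ℝ) (i j : Fin n)
    (x : EuclideanSpace ℝ (Fin n)) : ℝ :=
  pd n (pd n f i) j x

/-- The minimal graph equation `Δf − (∂_i f ∂_j f ∂_{ij} f)/(1+|∇f|²) + n/f = 0` at `x`. -/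
def MinGraphEq (n : ℕ) (f : EuclideanSpace ℝ (Fin n) → ℝ)
    (x : EuclideanSpace ℝ (Fin n)) : Prop :=
  (∑ i, pd2 n f i i x)
    - (∑ i, ∑ j, pd n f i x * pd n f j x * pd2 n f i j x) / (1 + ∑ i, (pd n f i x) ^ 2)
    + (n : ℝ) / f x = 0

/-- `f` is a solution of the minimal graph equation in `Ω`:
`f ∈ C(cl Ω) ∩ C^∞(Ω)`, `f > 0` in `Ω`, `f = 0` on `∂Ω`, and the PDE holds in `Ω`. -/
def IsMinSol (n : ℕ) (Ω : Set (EuclideanSpace ℝ (Fin n)))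
    (f : EuclideanSpace ℝ (Fin n) → ℝ) : Prop :=
  ContinuousOn f (closure Ω) ∧ ContDiffOn ℝ (⊤ : ℕ∞) f Ω ∧ (∀ x ∈ Ω, 0 < f x) ∧
    (∀ x ∈ frontier Ω, f x = 0) ∧ ∀ x ∈ Ω, MinGraphEq n f x

/-- The planar wedge `{x : (x₁,x₂) = (r cos θ, r sin θ), r > 0, θ ∈ (0, μπ)} ⊂ ℝⁿ`. -/
def wedge (n : ℕ) (hn : 2 ≤ n) (μ : ℝ) : Set (EuclideanSpace ℝ (Fin n)) :=
  {x | ∃ r : ℝ, 0 < r ∧ ∃ θ ∈ Set.Ioo 0 (μ * Real.pi),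
      x ⟨0, by omega⟩ = r * Real.cos θ ∧ x ⟨1, by omega⟩ = r * Real.sin θ}

theorem myDiv {E : Type*} [NormedAddCommGroup E] [NormedSpace ℝ E]
    {c d : E → ℝ} {c' d' : E →L[ℝ] ℝ} {x : E}
    (hc : HasFDerivAt c c' x) (hd : HasFDerivAt d d' x) (hx : d x ≠ 0) :
    HasFDerivAt (fun y => c y / d y)
      (c x • ((-((d x) ^ 2)⁻¹) • d') + (d x)⁻¹ • c') x := by
  have hinv : HasFDerivAt (fun y => (d y)⁻¹) ((-((d x) ^ 2)⁻¹) • d') x := by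
    have := (hasDerivAt_inv hx).comp_hasFDerivAt x hd
    exact this
  simp only [div_eq_mul_inv]; exact hc.mul hinv

def RR (n : ℕ) (hn : 2 ≤ n) (x : EuclideanSpace ℝ (Fin n)) : ℝ :=
  Real.sqrt (x ⟨0, by omega⟩ ^ 2 + x ⟨1, by omega⟩ ^ 2)

def TT (n : ℕ) (hn : 2 ≤ n) (x : EuclideanSpace ℝ (Fin n)) : ℝ :=
  Real.arccos (x ⟨0, by omega⟩ / RR n hn x)


def P0 (n : ℕ) (hn : 2 ≤ n) : EuclideanSpace ℝ (Fin n) →L[ℝ] ℝ :=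
  EuclideanSpace.proj ⟨0, by omega⟩

def P1 (n : ℕ) (hn : 2 ≤ n) : EuclideanSpace ℝ (Fin n) →L[ℝ] ℝ :=
  EuclideanSpace.proj ⟨1, by omega⟩

theorem P0_apply (n : ℕ) (hn : 2 ≤ n) (y : EuclideanSpace ℝ (Fin n)) :
    P0 n hn y = y ⟨0, by omega⟩ := rfl

theorem P1_apply (n : ℕ) (hn : 2 ≤ n) (y : EuclideanSpace ℝ (Fin n)) :
    P1 n hn y = y ⟨1, by omega⟩ := rfl

theorem hasFDerivAt_RT (n : ℕ) (hn : 2 ≤ n) {x : EuclideanSpace ℝ (Fin n)}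
    (hv : 0 < x ⟨1, by omega⟩) :
    HasFDerivAt (RR n hn)
      ((x ⟨0, by omega⟩ / RR n hn x) • P0 n hn + (x ⟨1, by omega⟩ / RR n hn x) • P1 n hn) x ∧
    HasFDerivAt (TT n hn)
      ((-(x ⟨1, by omega⟩ / RR n hn x ^ 2)) • P0 n hn
        + (x ⟨0, by omega⟩ / RR n hn x ^ 2) • P1 n hn) x := by
  have hs : (0:ℝ) < x ⟨0, by omega⟩ ^ 2 + x ⟨1, by omega⟩ ^ 2 := by positivity
  have hr : 0 < RR n hn x := Real.sqrt_pos.mpr hs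
  have hsq : x ⟨0, by omega⟩ ^ 2 + x ⟨1, by omega⟩ ^ 2 = RR n hn x ^ 2 :=
    (Real.sq_sqrt hs.le).symm
  have hrr : RR n hn x ≠ 0 := hr.ne'
  have hvr : x ⟨1, by omega⟩ ≠ 0 := hv.ne'
  have h0 : HasFDerivAt (fun y : EuclideanSpace ℝ (Fin n) => y ⟨0, by omega⟩) (P0 n hn) x :=
    (P0 n hn).hasFDerivAt
  have h1 : HasFDerivAt (fun y : EuclideanSpace ℝ (Fin n) => y ⟨1, by omega⟩) (P1 n hn) x :=
    (P1 n hn).hasFDerivAt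
  have hsum : HasFDerivAt (fun y : EuclideanSpace ℝ (Fin n) =>
      y ⟨0, by omega⟩ ^ 2 + y ⟨1, by omega⟩ ^ 2)
      ((x ⟨0, by omega⟩ • P0 n hn + x ⟨0, by omega⟩ • P0 n hn)
        + (x ⟨1, by omega⟩ • P1 n hn + x ⟨1, by omega⟩ • P1 n hn)) x := by
    simp only [pow_two]; exact (h0.mul h0).add (h1.mul h1)
  have hRr : Real.sqrt (x ⟨0, by omega⟩ ^ 2 + x ⟨1, by omega⟩ ^ 2) = RR n hn x := rfl
  have hR : HasFDerivAt (RR n hn)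
      ((x ⟨0, by omega⟩ / RR n hn x) • P0 n hn + (x ⟨1, by omega⟩ / RR n hn x) • P1 n hn) x := by
    have h2 := hsum.sqrt hs.ne'
    rw [hRr] at h2
    have h3 : HasFDerivAt (RR n hn)
        ((1 / (2 * RR n hn x)) • ((x ⟨0, by omega⟩ • P0 n hn + x ⟨0, by omega⟩ • P0 n hn)
          + (x ⟨1, by omega⟩ • P1 n hn + x ⟨1, by omega⟩ • P1 n hn))) x := h2
    convert h3 using 1
    ext y
    simp only [ContinuousLinearMap.add_apply, ContinuousLinearMap.smul_apply, smul_eq_mul,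
      P0_apply, P1_apply]
    field_simp
    ring
  refine ⟨hR, ?_⟩
  have hq : HasFDerivAt (fun y => y ⟨0, by omega⟩ / RR n hn y)
      (x ⟨0, by omega⟩ • ((-((RR n hn x) ^ 2)⁻¹) •
          ((x ⟨0, by omega⟩ / RR n hn x) • P0 n hn + (x ⟨1, by omega⟩ / RR n hn x) • P1 n hn))
        + (RR n hn x)⁻¹ • P0 n hn) x := myDiv h0 hR hrr
  have habs2 : (x ⟨0, by omega⟩ / RR n hn x) ^ 2 < 1 := by
    rw [div_pow, div_lt_one (by positivity)]
    nlinarith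
  have hq1 : x ⟨0, by omega⟩ / RR n hn x ≠ -1 := by
    intro hc; rw [hc] at habs2; norm_num at habs2
  have hq2 : x ⟨0, by omega⟩ / RR n hn x ≠ 1 := by
    intro hc; rw [hc] at habs2; norm_num at habs2
  have hroot : Real.sqrt (1 - (x ⟨0, by omega⟩ / RR n hn x) ^ 2)
      = x ⟨1, by omega⟩ / RR n hn x := by
    have he : 1 - (x ⟨0, by omega⟩ / RR n hn x) ^ 2 = (x ⟨1, by omega⟩ / RR n hn x) ^ 2 := by
      field_simp
      linarith
    rw [he, Real.sqrt_sq (by positivity)]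
  have harc : HasFDerivAt (TT n hn)
      ((-(1 / Real.sqrt (1 - (x ⟨0, by omega⟩ / RR n hn x) ^ 2))) •
        (x ⟨0, by omega⟩ • ((-((RR n hn x) ^ 2)⁻¹) •
          ((x ⟨0, by omega⟩ / RR n hn x) • P0 n hn + (x ⟨1, by omega⟩ / RR n hn x) • P1 n hn))
        + (RR n hn x)⁻¹ • P0 n hn)) x := by
    have h2 := (Real.hasDerivAt_arccos hq1 hq2).comp_hasFDerivAt x hq
    exact h2
  rw [hroot] at harc
  convert harc using 1
  ext y
  simp only [ContinuousLinearMap.add_apply, ContinuousLinearMap.smul_apply, smul_eq_mul,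
    ContinuousLinearMap.neg_apply, P0_apply, P1_apply, neg_smul]
  field_simp
  ring_nf
  linear_combination (-(y ⟨0, by omega⟩)) * hsq

def gA (n : ℕ) (hn : 2 ≤ n) (h : ℝ → ℝ) (x : EuclideanSpace ℝ (Fin n)) : ℝ :=
  (h (TT n hn x) * x ⟨0, by omega⟩ - deriv h (TT n hn x) * x ⟨1, by omega⟩) / RR n hn x

def gB (n : ℕ) (hn : 2 ≤ n) (h : ℝ → ℝ) (x : EuclideanSpace ℝ (Fin n)) : ℝ :=
  (h (TT n hn x) * x ⟨1, by omega⟩ + deriv h (TT n hn x) * x ⟨0, by omega⟩) / RR n hn x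

theorem hasFDerivAt_fF (n : ℕ) (hn : 2 ≤ n) (h : ℝ → ℝ) {x : EuclideanSpace ℝ (Fin n)}
    (hv : 0 < x ⟨1, by omega⟩)
    (hd1 : HasDerivAt h (deriv h (TT n hn x)) (TT n hn x)) :
    HasFDerivAt (fun y => RR n hn y * h (TT n hn y))
      (gA n hn h x • P0 n hn + gB n hn h x • P1 n hn) x := by
  obtain ⟨hR, hT⟩ := hasFDerivAt_RT n hn hv
  have hs : (0:ℝ) < x ⟨0, by omega⟩ ^ 2 + x ⟨1, by omega⟩ ^ 2 := by positivity
  have hr : 0 < RR n hn x := Real.sqrt_pos.mpr hs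
  have hhT : HasFDerivAt (fun y => h (TT n hn y))
      (deriv h (TT n hn x) • ((-(x ⟨1, by omega⟩ / RR n hn x ^ 2)) • P0 n hn
        + (x ⟨0, by omega⟩ / RR n hn x ^ 2) • P1 n hn)) x := by
    exact hd1.comp_hasFDerivAt x hT
  have hmul := hR.mul hhT
  refine hmul.congr_fderiv (Eq.symm ?_)
  ext y
  simp only [ContinuousLinearMap.add_apply, ContinuousLinearMap.smul_apply, smul_eq_mul,
    ContinuousLinearMap.neg_apply, P0_apply, P1_apply, neg_smul, gA, gB]
  field_simp
  ring

theorem hasFDerivAt_gA (n : ℕ) (hn : 2 ≤ n) (h : ℝ → ℝ) {x : EuclideanSpace ℝ (Fin n)}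
    (hv : 0 < x ⟨1, by omega⟩)
    (hd1 : HasDerivAt h (deriv h (TT n hn x)) (TT n hn x))
    (hd2 : HasDerivAt (deriv h) (deriv (deriv h) (TT n hn x)) (TT n hn x)) :
    HasFDerivAt (gA n hn h)
      (((deriv (deriv h) (TT n hn x) + h (TT n hn x)) * x ⟨1, by omega⟩ ^ 2 / RR n hn x ^ 3)
          • P0 n hn
        + (-((deriv (deriv h) (TT n hn x) + h (TT n hn x)) * x ⟨0, by omega⟩ * x ⟨1, by omega⟩
            / RR n hn x ^ 3)) • P1 n hn) x := by
  obtain ⟨hR, hT⟩ := hasFDerivAt_RT n hn hv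
  have hs : (0:ℝ) < x ⟨0, by omega⟩ ^ 2 + x ⟨1, by omega⟩ ^ 2 := by positivity
  have hr : 0 < RR n hn x := Real.sqrt_pos.mpr hs
  have hsq : x ⟨0, by omega⟩ ^ 2 + x ⟨1, by omega⟩ ^ 2 = RR n hn x ^ 2 :=
    (Real.sq_sqrt hs.le).symm
  have h0 : HasFDerivAt (fun y : EuclideanSpace ℝ (Fin n) => y ⟨0, by omega⟩) (P0 n hn) x :=
    (P0 n hn).hasFDerivAt
  have h1 : HasFDerivAt (fun y : EuclideanSpace ℝ (Fin n) => y ⟨1, by omega⟩) (P1 n hn) x :=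
    (P1 n hn).hasFDerivAt
  have hhT : HasFDerivAt (fun y => h (TT n hn y))
      (deriv h (TT n hn x) • ((-(x ⟨1, by omega⟩ / RR n hn x ^ 2)) • P0 n hn
        + (x ⟨0, by omega⟩ / RR n hn x ^ 2) • P1 n hn)) x := by
    exact hd1.comp_hasFDerivAt x hT
  have hh'T : HasFDerivAt (fun y => deriv h (TT n hn y))
      (deriv (deriv h) (TT n hn x) • ((-(x ⟨1, by omega⟩ / RR n hn x ^ 2)) • P0 n hn
        + (x ⟨0, by omega⟩ / RR n hn x ^ 2) • P1 n hn)) x := by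
    exact hd2.comp_hasFDerivAt x hT
  have hNum := (hhT.mul h0).sub (hh'T.mul h1)
  have hdiv := myDiv hNum hR hr.ne'
  have hgA : gA n hn h = fun y =>
      (h (TT n hn y) * y ⟨0, by omega⟩ - deriv h (TT n hn y) * y ⟨1, by omega⟩) / RR n hn y :=
    rfl
  rw [hgA]
  refine hdiv.congr_fderiv (Eq.symm ?_)
  ext y
  simp only [ContinuousLinearMap.add_apply, ContinuousLinearMap.smul_apply, smul_eq_mul,
    ContinuousLinearMap.neg_apply, ContinuousLinearMap.sub_apply, P0_apply, P1_apply, neg_smul,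
    Pi.mul_apply, Pi.sub_apply, Pi.add_apply]
  field_simp
  ring_nf
  linear_combination (
    (h (TT n hn x) * y ⟨0, by omega⟩ - deriv h (TT n hn x) * y ⟨1, by omega⟩)) * hsq

theorem hasFDerivAt_gB (n : ℕ) (hn : 2 ≤ n) (h : ℝ → ℝ) {x : EuclideanSpace ℝ (Fin n)}
    (hv : 0 < x ⟨1, by omega⟩)
    (hd1 : HasDerivAt h (deriv h (TT n hn x)) (TT n hn x))
    (hd2 : HasDerivAt (deriv h) (deriv (deriv h) (TT n hn x)) (TT n hn x)) :
    HasFDerivAt (gB n hn h)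
      ((-((deriv (deriv h) (TT n hn x) + h (TT n hn x)) * x ⟨0, by omega⟩ * x ⟨1, by omega⟩
            / RR n hn x ^ 3)) • P0 n hn
        + (((deriv (deriv h) (TT n hn x) + h (TT n hn x)) * x ⟨0, by omega⟩ ^ 2 / RR n hn x ^ 3))
          • P1 n hn) x := by
  obtain ⟨hR, hT⟩ := hasFDerivAt_RT n hn hv
  have hs : (0:ℝ) < x ⟨0, by omega⟩ ^ 2 + x ⟨1, by omega⟩ ^ 2 := by positivity
  have hr : 0 < RR n hn x := Real.sqrt_pos.mpr hs
  have hsq : x ⟨0, by omega⟩ ^ 2 + x ⟨1, by omega⟩ ^ 2 = RR n hn x ^ 2 :=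
    (Real.sq_sqrt hs.le).symm
  have h0 : HasFDerivAt (fun y : EuclideanSpace ℝ (Fin n) => y ⟨0, by omega⟩) (P0 n hn) x :=
    (P0 n hn).hasFDerivAt
  have h1 : HasFDerivAt (fun y : EuclideanSpace ℝ (Fin n) => y ⟨1, by omega⟩) (P1 n hn) x :=
    (P1 n hn).hasFDerivAt
  have hhT : HasFDerivAt (fun y => h (TT n hn y))
      (deriv h (TT n hn x) • ((-(x ⟨1, by omega⟩ / RR n hn x ^ 2)) • P0 n hn
        + (x ⟨0, by omega⟩ / RR n hn x ^ 2) • P1 n hn)) x := by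
    exact hd1.comp_hasFDerivAt x hT
  have hh'T : HasFDerivAt (fun y => deriv h (TT n hn y))
      (deriv (deriv h) (TT n hn x) • ((-(x ⟨1, by omega⟩ / RR n hn x ^ 2)) • P0 n hn
        + (x ⟨0, by omega⟩ / RR n hn x ^ 2) • P1 n hn)) x := by
    exact hd2.comp_hasFDerivAt x hT
  have hNum := (hhT.mul h1).add (hh'T.mul h0)
  have hdiv := myDiv hNum hR hr.ne'
  have hgB : gB n hn h = fun y =>
      (h (TT n hn y) * y ⟨1, by omega⟩ + deriv h (TT n hn y) * y ⟨0, by omega⟩) / RR n hn y :=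
    rfl
  rw [hgB]
  refine hdiv.congr_fderiv (Eq.symm ?_)
  ext y
  simp only [ContinuousLinearMap.add_apply, ContinuousLinearMap.smul_apply, smul_eq_mul,
    ContinuousLinearMap.neg_apply, ContinuousLinearMap.sub_apply, P0_apply, P1_apply, neg_smul,
    Pi.mul_apply, Pi.sub_apply, Pi.add_apply]
  field_simp
  ring_nf
  linear_combination (
    (deriv h (TT n hn x) * y ⟨0, by omega⟩ + h (TT n hn x) * y ⟨1, by omega⟩)) * hsq

/-- facts at a wedge point -/
theorem wedge_facts (n : ℕ) (hn : 2 ≤ n) (μ : ℝ) (hμ : μ ∈ Set.Ioo (0:ℝ) 1)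
    {x : EuclideanSpace ℝ (Fin n)} (hx : x ∈ wedge n hn μ) :
    0 < x ⟨1, by omega⟩ ∧ 0 < RR n hn x ∧
      x ⟨0, by omega⟩ ^ 2 + x ⟨1, by omega⟩ ^ 2 = RR n hn x ^ 2 ∧
      TT n hn x ∈ Set.Ioo 0 (μ * Real.pi) ∧
      Real.cos (TT n hn x) = x ⟨0, by omega⟩ / RR n hn x ∧
      Real.sin (TT n hn x) = x ⟨1, by omega⟩ / RR n hn x := by
  obtain ⟨r, hr, θ, hθ, h0, h1⟩ := hx
  have hπ : (0:ℝ) < Real.pi := Real.pi_pos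
  have hθπ : θ < Real.pi := lt_of_lt_of_le hθ.2 (by nlinarith [hμ.2])
  have hsin : 0 < Real.sin θ := Real.sin_pos_of_pos_of_lt_pi hθ.1 hθπ
  have hsq : x ⟨0, by omega⟩ ^ 2 + x ⟨1, by omega⟩ ^ 2 = r ^ 2 := by
    rw [h0, h1]; have := Real.sin_sq_add_cos_sq θ; nlinarith [this]
  have hR : RR n hn x = r := by
    rw [RR, hsq, Real.sqrt_sq hr.le]
  have hT : TT n hn x = θ := by
    rw [TT, hR, h0, mul_comm, mul_div_assoc, div_self hr.ne', mul_one,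
      Real.arccos_cos hθ.1.le hθπ.le]
  refine ⟨by rw [h1]; positivity, by rw [hR]; exact hr, hsq ▸ (hR ▸ rfl), hT ▸ hθ, ?_, ?_⟩
  · rw [hT, hR, h0]; field_simp
  · rw [hT, hR, h1]; field_simp

theorem mem_wedge (n : ℕ) (hn : 2 ≤ n) (μ : ℝ) (hμ : μ ∈ Set.Ioo (0:ℝ) 1)
    {x : EuclideanSpace ℝ (Fin n)} (hv : 0 < x ⟨1, by omega⟩)
    (hT : TT n hn x < μ * Real.pi) : x ∈ wedge n hn μ := by
  have hs : 0 < x ⟨0, by omega⟩ ^ 2 + x ⟨1, by omega⟩ ^ 2 := by positivity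
  have hr : 0 < RR n hn x := Real.sqrt_pos.mpr hs
  have hsq : RR n hn x ^ 2 = x ⟨0, by omega⟩ ^ 2 + x ⟨1, by omega⟩ ^ 2 :=
    Real.sq_sqrt hs.le
  have habs : |x ⟨0, by omega⟩| < RR n hn x := by
    rw [← Real.sqrt_sq_eq_abs]
    exact Real.sqrt_lt_sqrt (sq_nonneg _) (by nlinarith)
  have hq1 : -1 < x ⟨0, by omega⟩ / RR n hn x := by
    rw [lt_div_iff₀ hr]; nlinarith [abs_lt.mp habs]
  have hq2 : x ⟨0, by omega⟩ / RR n hn x < 1 := by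
    rw [div_lt_one hr]; nlinarith [abs_lt.mp habs]
  refine ⟨RR n hn x, hr, TT n hn x, ⟨Real.arccos_pos.mpr hq2, hT⟩, ?_, ?_⟩
  · rw [TT, Real.cos_arccos hq1.le hq2.le]; field_simp
  · rw [TT, Real.sin_arccos]
    have : 1 - (x ⟨0, by omega⟩ / RR n hn x) ^ 2 = (x ⟨1, by omega⟩ / RR n hn x) ^ 2 := by
      field_simp; nlinarith
    rw [this, Real.sqrt_sq (by positivity)]
    field_simp

theorem isOpen_wedge (n : ℕ) (hn : 2 ≤ n) (μ : ℝ) (hμ : μ ∈ Set.Ioo (0:ℝ) 1) :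
    IsOpen (wedge n hn μ) := by
  have hset : wedge n hn μ =
      {x : EuclideanSpace ℝ (Fin n) | 0 < x ⟨1, by omega⟩} ∩ (TT n hn) ⁻¹' (Set.Iio (μ * Real.pi)) := by
    ext x
    constructor
    · intro hx
      obtain ⟨hv, _, _, hTmem, _, _⟩ := wedge_facts n hn μ hμ hx
      exact ⟨hv, hTmem.2⟩
    · rintro ⟨hv, hT⟩
      exact mem_wedge n hn μ hμ hv hT
  rw [hset]
  have hopen : IsOpen {x : EuclideanSpace ℝ (Fin n) | 0 < x ⟨1, by omega⟩} :=
    isOpen_lt continuous_const (EuclideanSpace.proj (⟨1, by omega⟩ : Fin n)).continuous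
  have hcont : ContinuousOn (TT n hn) {x : EuclideanSpace ℝ (Fin n) | 0 < x ⟨1, by omega⟩} := by
    apply Real.continuous_arccos.comp_continuousOn
    apply ContinuousOn.div
    · exact ((EuclideanSpace.proj (⟨0, by omega⟩ : Fin n)).continuous).continuousOn
    · apply Continuous.continuousOn
      exact Real.continuous_sqrt.comp
        ((((EuclideanSpace.proj (⟨0, by omega⟩ : Fin n)).continuous).pow 2).add
          (((EuclideanSpace.proj (⟨1, by omega⟩ : Fin n)).continuous).pow 2))
    · intro x hx
      have : (0:ℝ) < x ⟨0, by omega⟩ ^ 2 + x ⟨1, by omega⟩ ^ 2 := by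
        have : 0 < x ⟨1, by omega⟩ := hx
        positivity
      exact (Real.sqrt_pos.mpr this).ne'
  exact hcont.isOpen_inter_preimage hopen isOpen_Iio

theorem sumred (n : ℕ) (hn : 2 ≤ n) (g : Fin n → ℝ)
    (hg : ∀ i, i ≠ (⟨0, by omega⟩ : Fin n) → i ≠ (⟨1, by omega⟩ : Fin n) → g i = 0) :
    ∑ i, g i = g ⟨0, by omega⟩ + g ⟨1, by omega⟩ := by
  have hne : (⟨0, by omega⟩ : Fin n) ≠ ⟨1, by omega⟩ := by simp
  rw [← Finset.sum_subset
      (Finset.subset_univ ({⟨0, by omega⟩, ⟨1, by omega⟩} : Finset (Fin n)))]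
  · rw [Finset.sum_pair hne]
  · intro i _ hi
    simp only [Finset.mem_insert, Finset.mem_singleton] at hi
    push_neg at hi
    exact hg i hi.1 hi.2

theorem key (n : ℕ) (hn : 2 ≤ n) (μ : ℝ) (hμ : μ ∈ Set.Ioo (0:ℝ) 1)
    (h : ℝ → ℝ) (hsm : ContDiffOn ℝ 2 h (Set.Ioo 0 (μ * Real.pi)))
    (hpos : ∀ θ ∈ Set.Ioo 0 (μ * Real.pi), 0 < h θ)
    (f : EuclideanSpace ℝ (Fin n) → ℝ)
    (hf : f = fun y => RR n hn y * h (TT n hn y))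
    {x : EuclideanSpace ℝ (Fin n)} (hx : x ∈ wedge n hn μ) :
    MinGraphEq n f x ↔
      h (TT n hn x) * (1 + h (TT n hn x) ^ 2)
          * (deriv (deriv h) (TT n hn x) + h (TT n hn x))
        + (n : ℝ) * (1 + h (TT n hn x) ^ 2 + (deriv h (TT n hn x)) ^ 2) = 0 := by
  obtain ⟨hv, hr, hsq, hθmem, hcos, hsin⟩ := wedge_facts n hn μ hμ hx
  have hIo : IsOpen (Set.Ioo (0:ℝ) (μ * Real.pi)) := isOpen_Ioo
  have hd1 : ∀ θ ∈ Set.Ioo (0:ℝ) (μ * Real.pi), HasDerivAt h (deriv h θ) θ := fun θ hθ =>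
    ((hsm.differentiableOn (by norm_num)).differentiableAt (hIo.mem_nhds hθ)).hasDerivAt
  have hC1 : ContDiffOn ℝ 1 (deriv h) (Set.Ioo (0:ℝ) (μ * Real.pi)) :=
    hsm.deriv_of_isOpen hIo (by norm_num)
  have hd2 : ∀ θ ∈ Set.Ioo (0:ℝ) (μ * Real.pi),
      HasDerivAt (deriv h) (deriv (deriv h) θ) θ := fun θ hθ =>
    ((hC1.differentiableOn (by norm_num)).differentiableAt (hIo.mem_nhds hθ)).hasDerivAt
  have hfder : ∀ y ∈ wedge n hn μ,
      fderiv ℝ f y = gA n hn h y • P0 n hn + gB n hn h y • P1 n hn := by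
    intro y hy
    obtain ⟨hv', _, _, hθ', _, _⟩ := wedge_facts n hn μ hμ hy
    rw [hf]
    exact (hasFDerivAt_fF n hn h hv' (hd1 _ hθ')).fderiv
  have pdval : ∀ y ∈ wedge n hn μ, ∀ j : Fin n,
      pd n f j y = if j = ⟨0, by omega⟩ then gA n hn h y
        else if j = ⟨1, by omega⟩ then gB n hn h y else 0 := by
    intro y hy j
    show fderiv ℝ f y (EuclideanSpace.single j 1) = _
    rw [hfder y hy]
    simp only [ContinuousLinearMap.add_apply, ContinuousLinearMap.smul_apply, smul_eq_mul,
      P0_apply, P1_apply, EuclideanSpace.single_apply]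
    by_cases hj0 : j = (⟨0, by omega⟩ : Fin n)
    · subst hj0; simp
    · by_cases hj1 : j = (⟨1, by omega⟩ : Fin n)
      · subst hj1; simp
      · simp [hj0, hj1, Ne.symm hj0, Ne.symm hj1]
  have hnh : wedge n hn μ ∈ 𝓝 x := (isOpen_wedge n hn μ hμ).mem_nhds hx
  have EvA : pd n f (⟨0, by omega⟩ : Fin n) =ᶠ[𝓝 x] gA n hn h := by
    filter_upwards [hnh] with y hy
    rw [pdval y hy]; simp
  have EvB : pd n f (⟨1, by omega⟩ : Fin n) =ᶠ[𝓝 x] gB n hn h := by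
    filter_upwards [hnh] with y hy
    rw [pdval y hy]; simp
  have p00 : pd2 n f ⟨0, by omega⟩ ⟨0, by omega⟩ x
      = (deriv (deriv h) (TT n hn x) + h (TT n hn x)) * x ⟨1, by omega⟩ ^ 2 / RR n hn x ^ 3 := by
    show fderiv ℝ (pd n f ⟨0, by omega⟩) x (EuclideanSpace.single ⟨0, by omega⟩ 1) = _
    rw [EvA.fderiv_eq, (hasFDerivAt_gA n hn h hv (hd1 _ hθmem) (hd2 _ hθmem)).fderiv]
    simp [ContinuousLinearMap.add_apply, ContinuousLinearMap.smul_apply, smul_eq_mul,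
      P0_apply, P1_apply, EuclideanSpace.single_apply]
  have p01 : pd2 n f ⟨0, by omega⟩ ⟨1, by omega⟩ x
      = -((deriv (deriv h) (TT n hn x) + h (TT n hn x)) * x ⟨0, by omega⟩ * x ⟨1, by omega⟩
          / RR n hn x ^ 3) := by
    show fderiv ℝ (pd n f ⟨0, by omega⟩) x (EuclideanSpace.single ⟨1, by omega⟩ 1) = _
    rw [EvA.fderiv_eq, (hasFDerivAt_gA n hn h hv (hd1 _ hθmem) (hd2 _ hθmem)).fderiv]
    simp [ContinuousLinearMap.add_apply, ContinuousLinearMap.smul_apply, smul_eq_mul,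
      P0_apply, P1_apply, EuclideanSpace.single_apply]
  have p10 : pd2 n f ⟨1, by omega⟩ ⟨0, by omega⟩ x
      = -((deriv (deriv h) (TT n hn x) + h (TT n hn x)) * x ⟨0, by omega⟩ * x ⟨1, by omega⟩
          / RR n hn x ^ 3) := by
    show fderiv ℝ (pd n f ⟨1, by omega⟩) x (EuclideanSpace.single ⟨0, by omega⟩ 1) = _
    rw [EvB.fderiv_eq, (hasFDerivAt_gB n hn h hv (hd1 _ hθmem) (hd2 _ hθmem)).fderiv]
    simp [ContinuousLinearMap.add_apply, ContinuousLinearMap.smul_apply, smul_eq_mul,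
      P0_apply, P1_apply, EuclideanSpace.single_apply]
  have p11 : pd2 n f ⟨1, by omega⟩ ⟨1, by omega⟩ x
      = (deriv (deriv h) (TT n hn x) + h (TT n hn x)) * x ⟨0, by omega⟩ ^ 2 / RR n hn x ^ 3 := by
    show fderiv ℝ (pd n f ⟨1, by omega⟩) x (EuclideanSpace.single ⟨1, by omega⟩ 1) = _
    rw [EvB.fderiv_eq, (hasFDerivAt_gB n hn h hv (hd1 _ hθmem) (hd2 _ hθmem)).fderiv]
    simp [ContinuousLinearMap.add_apply, ContinuousLinearMap.smul_apply, smul_eq_mul,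
      P0_apply, P1_apply, EuclideanSpace.single_apply]
  have pother : ∀ i : Fin n, i ≠ ⟨0, by omega⟩ → i ≠ ⟨1, by omega⟩ →
      pd2 n f i i x = 0 := by
    intro i hi0 hi1
    have Ev0 : pd n f i =ᶠ[𝓝 x] fun _ => (0:ℝ) := by
      filter_upwards [hnh] with y hy
      rw [pdval y hy]; simp [hi0, hi1]
    show fderiv ℝ (pd n f i) x (EuclideanSpace.single i 1) = 0
    rw [Ev0.fderiv_eq]
    simp
  have hrne : RR n hn x ≠ 0 := hr.ne'
  have hHpos : 0 < h (TT n hn x) := hpos _ hθmem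
  have pdA : pd n f ⟨0, by omega⟩ x = gA n hn h x := by rw [pdval x hx]; simp
  have pdB : pd n f ⟨1, by omega⟩ x = gB n hn h x := by rw [pdval x hx]; simp
  have hS2 : ∑ i, pd2 n f i i x
      = (deriv (deriv h) (TT n hn x) + h (TT n hn x)) / RR n hn x := by
    rw [sumred n hn _ (fun i a b => pother i a b), p00, p11]
    field_simp
    linear_combination ((deriv (deriv h) (TT n hn x) + h (TT n hn x))) * hsq
  have hS1 : ∑ i, pd n f i x ^ 2
      = h (TT n hn x) ^ 2 + deriv h (TT n hn x) ^ 2 := by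
    rw [sumred n hn _ (fun i hi0 hi1 => by rw [pdval x hx i]; simp [hi0, hi1]), pdA, pdB]
    simp only [gA, gB]
    field_simp
    linear_combination (h (TT n hn x) ^ 2 + deriv h (TT n hn x) ^ 2) * hsq
  have hQ : ∑ i, ∑ j, pd n f i x * pd n f j x * pd2 n f i j x
      = (deriv (deriv h) (TT n hn x) + h (TT n hn x)) * deriv h (TT n hn x) ^ 2
        / RR n hn x := by
    rw [sumred n hn _ (fun i hi0 hi1 => Finset.sum_eq_zero fun j _ => by
      rw [pdval x hx i]; simp [hi0, hi1])]
    rw [sumred n hn _ (fun j hj0 hj1 => by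
      rw [pdval x hx j]; simp [hj0, hj1])]
    rw [sumred n hn _ (fun j hj0 hj1 => by
      rw [pdval x hx j]; simp [hj0, hj1])]
    rw [pdA, pdB, p00, p01, p10, p11]
    simp only [gA, gB]
    field_simp
    ring_nf
    linear_combination ((h (TT n hn x) + deriv (deriv h) (TT n hn x))
      * deriv h (TT n hn x) ^ 2
      * (x ⟨0, by omega⟩ ^ 2 + x ⟨1, by omega⟩ ^ 2 + RR n hn x ^ 2)) * hsq
  have hfx : f x = RR n hn x * h (TT n hn x) := by rw [hf]
  unfold MinGraphEq
  rw [hS2, hS1, hQ, hfx]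
  have hdenne : RR n hn x * h (TT n hn x)
      * (1 + (h (TT n hn x) ^ 2 + deriv h (TT n hn x) ^ 2)) ≠ 0 := by positivity
  have main : (deriv (deriv h) (TT n hn x) + h (TT n hn x)) / RR n hn x
      - (deriv (deriv h) (TT n hn x) + h (TT n hn x)) * deriv h (TT n hn x) ^ 2 / RR n hn x
        / (1 + (h (TT n hn x) ^ 2 + deriv h (TT n hn x) ^ 2))
      + (n : ℝ) / (RR n hn x * h (TT n hn x))
      = (h (TT n hn x) * (1 + h (TT n hn x) ^ 2)
          * (deriv (deriv h) (TT n hn x) + h (TT n hn x))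
        + (n : ℝ) * (1 + h (TT n hn x) ^ 2 + (deriv h (TT n hn x)) ^ 2))
        / (RR n hn x * h (TT n hn x)
            * (1 + (h (TT n hn x) ^ 2 + deriv h (TT n hn x) ^ 2))) := by
    field_simp
    ring
  rw [main, div_eq_zero_iff, or_iff_left hdenne]


/-- In the wedge `V_μ`, the ansatz `f(x) = r h(θ)` (with `(r,θ)` the polar
coordinates of `(x₁,x₂)`, so `r = √(x₁²+x₂²)` and `θ = arccos(x₁/r)`) solves the minimal
graph equation if and only if `h` solves the ODE `h(1+h²)(h''+h) + n(1+h²+(h')²) = 0` on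
`(0, μπ)`. -/
theorem stmt13 (n : ℕ) (hn : 2 ≤ n) (μ : ℝ) (hμ : μ ∈ Set.Ioo (0:ℝ) 1)
    (h : ℝ → ℝ) (hsm : ContDiffOn ℝ 2 h (Set.Ioo 0 (μ * Real.pi)))
    (hpos : ∀ θ ∈ Set.Ioo 0 (μ * Real.pi), 0 < h θ)
    (f : EuclideanSpace ℝ (Fin n) → ℝ)
    (hf : ∀ x : EuclideanSpace ℝ (Fin n),
      f x = Real.sqrt (x ⟨0, by omega⟩ ^ 2 + x ⟨1, by omega⟩ ^ 2)
        * h (Real.arccos (x ⟨0, by omega⟩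
            / Real.sqrt (x ⟨0, by omega⟩ ^ 2 + x ⟨1, by omega⟩ ^ 2)))) :
    (∀ x ∈ wedge n hn μ, MinGraphEq n f x) ↔
      ∀ θ ∈ Set.Ioo 0 (μ * Real.pi),
        h θ * (1 + h θ ^ 2) * (deriv (deriv h) θ + h θ)
          + (n : ℝ) * (1 + h θ ^ 2 + (deriv h θ) ^ 2) = 0 := by
  have hf2 : f = fun y => RR n hn y * h (TT n hn y) := funext fun y => by rw [hf y]; rfl
  constructor
  · intro hmin θ hθ
    have hθπ : θ < Real.pi := lt_of_lt_of_le hθ.2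
      (by nlinarith [hμ.2, Real.pi_pos])
    set x : EuclideanSpace ℝ (Fin n) :=
      EuclideanSpace.single ⟨0, by omega⟩ (Real.cos θ)
        + EuclideanSpace.single ⟨1, by omega⟩ (Real.sin θ) with hxdef
    have hx0 : x ⟨0, by omega⟩ = Real.cos θ := by
      simp [hxdef, EuclideanSpace.single_apply, PiLp.add_apply]
    have hx1 : x ⟨1, by omega⟩ = Real.sin θ := by
      simp [hxdef, EuclideanSpace.single_apply, PiLp.add_apply]
    have hxw : x ∈ wedge n hn μ :=
      ⟨1, one_pos, θ, hθ, by rw [hx0]; ring, by rw [hx1]; ring⟩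
    have hR1 : RR n hn x = 1 := by
      have : x ⟨0, by omega⟩ ^ 2 + x ⟨1, by omega⟩ ^ 2 = 1 := by
        rw [hx0, hx1]; exact Real.cos_sq_add_sin_sq θ
      show Real.sqrt (x ⟨0, by omega⟩ ^ 2 + x ⟨1, by omega⟩ ^ 2) = 1
      rw [this, Real.sqrt_one]
    have hTx : TT n hn x = θ := by
      show Real.arccos (x ⟨0, by omega⟩ / RR n hn x) = θ
      rw [hR1, hx0, div_one, Real.arccos_cos hθ.1.le hθπ.le]
    have := (key n hn μ hμ h hsm hpos f hf2 hxw).mp (hmin x hxw)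
    rwa [hTx] at this
  · intro hode x hx
    obtain ⟨_, _, _, hθmem, _, _⟩ := wedge_facts n hn μ hμ hx
    exact (key n hn μ hμ h hsm hpos f hf2 hx).mpr (hode _ hθmem)
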